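/- For all a > 0, one has ln(tanh((a+1)/2)) / ln(tanh(a/2)) ≤ e⁻¹, and consequently 1/(1 - ln(tanh((a+1)/2))/ln(tanh(a/2))) ≤ 1/(1 - e⁻¹) ≤ 2. -/

import Mathlib

open Real

lemma aux_log_le (u : ℝ) (hu : 1 ≤ u) : Real.log u ≤ (u - u⁻¹) / 2 := by
  have key : MonotoneOn (fun v : ℝ => (v - v⁻¹) / 2 - Real.log v) (Set.Ici 1) := by
    have hsub : Set.Ici (1:ℝ) ⊆ {0}ᶜ := by
      intro x hx; simp only [Set.mem_compl_iff, Set.mem_singleton_iff]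
      exact ne_of_gt (lt_of_lt_of_le one_pos hx)
    apply monotoneOn_of_deriv_nonneg (convex_Ici 1)
    · exact ((continuousOn_id.sub (continuousOn_inv₀.mono hsub)).div_const 2).sub
        (Real.continuousOn_log.mono hsub)
    · intro x hx
      rw [interior_Ici] at hx
      have hx0 : (0:ℝ) < x := lt_trans one_pos hx
      exact ((((hasDerivAt_id x).sub (hasDerivAt_inv hx0.ne')).div_const 2).sub
          (Real.hasDerivAt_log hx0.ne')).differentiableAt.differentiableWithinAt
    · intro x hx
      rw [interior_Ici] at hx
      have hx0 : (0:ℝ) < x := lt_trans one_pos hx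
      have h : HasDerivAt (fun v : ℝ => (v - v⁻¹) / 2 - Real.log v)
          ((1 - (-(x^2)⁻¹)) / 2 - x⁻¹) x :=
        (((hasDerivAt_id x).sub (hasDerivAt_inv hx0.ne')).div_const 2).sub
          (Real.hasDerivAt_log hx0.ne')
      rw [h.deriv, show (1 - (-(x^2)⁻¹)) / 2 - x⁻¹ = (x-1)^2/(2*x^2) from by
        field_simp; ring]
      positivity
  have := key (Set.mem_Ici.mpr (le_refl 1)) (Set.mem_Ici.mpr hu) hu
  simp at this
  linarith [this]

lemma aux_artanh_ub (s : ℝ) (h0 : 0 ≤ s) (h1 : s < 1) :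
    Real.log ((1+s)/(1-s)) ≤ 2*s/(1-s^2) := by
  have hs1 : (0:ℝ) < 1 - s := by linarith
  have hs2 : (0:ℝ) < 1 + s := by linarith
  have hsq : (0:ℝ) < 1 - s^2 := by nlinarith
  have hu : 1 ≤ (1+s)/(1-s) := by rw [le_div_iff₀ hs1]; linarith
  have h := aux_log_le _ hu
  have heq : ((1+s)/(1-s) - ((1+s)/(1-s))⁻¹) / 2 = 2*s/(1-s^2) := by
    rw [inv_div]
    field_simp
    ring
  linarith [heq ▸ h]

lemma aux_artanh_lb (t : ℝ) (h0 : 0 ≤ t) (h1 : t < 1) :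
    2*t + 2*t^3/3 ≤ Real.log (1+t) - Real.log (1-t) := by
  have key : MonotoneOn (fun v : ℝ => Real.log (1+v) - Real.log (1-v) - (2*v + 2*v^3/3))
      (Set.Icc 0 t) := by
    apply monotoneOn_of_deriv_nonneg (convex_Icc 0 t)
    · apply ContinuousOn.sub
      apply ContinuousOn.sub
      · apply ContinuousOn.log (by fun_prop)
        intro x hx
        simp only [Set.mem_Icc] at hx
        nlinarith [hx.1]
      · apply ContinuousOn.log (by fun_prop)
        intro x hx
        simp only [Set.mem_Icc] at hx
        nlinarith [hx.2]
      · fun_prop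
    · intro x hx
      rw [interior_Icc] at hx
      obtain ⟨hx0, hxt⟩ := hx
      have hxa : (0:ℝ) < 1 + x := by linarith
      have hxb : (0:ℝ) < 1 - x := by linarith
      have h : HasDerivAt (fun v : ℝ => Real.log (1+v) - Real.log (1-v) - (2*v + 2*v^3/3))
          (1/(1+x) - (-1)/(1-x) - (2 + 2*(3*x^2)/3)) x := by
        apply HasDerivAt.sub
        apply HasDerivAt.sub
        · simpa using (((hasDerivAt_id x).const_add 1).log hxa.ne')
        · simpa [sub_eq_add_neg] using (((hasDerivAt_id x).neg.const_add 1).log hxb.ne')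
        · have := ((hasDerivAt_id x).const_mul 2).add
            ((((hasDerivAt_pow 3 x).const_mul 2).div_const 3))
          exact this.congr_deriv (by norm_num)
      exact h.differentiableAt.differentiableWithinAt
    · intro x hx
      rw [interior_Icc] at hx
      obtain ⟨hx0, hxt⟩ := hx
      have hxa : (0:ℝ) < 1 + x := by linarith
      have hxb : (0:ℝ) < 1 - x := by linarith
      have h : HasDerivAt (fun v : ℝ => Real.log (1+v) - Real.log (1-v) - (2*v + 2*v^3/3))
          (1/(1+x) - (-1)/(1-x) - (2 + 2*(3*x^2)/3)) x := by
        apply HasDerivAt.sub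
        apply HasDerivAt.sub
        · simpa using (((hasDerivAt_id x).const_add 1).log hxa.ne')
        · simpa [sub_eq_add_neg] using (((hasDerivAt_id x).neg.const_add 1).log hxb.ne')
        · have := ((hasDerivAt_id x).const_mul 2).add
            ((((hasDerivAt_pow 3 x).const_mul 2).div_const 3))
          exact this.congr_deriv (by norm_num)
      rw [h.deriv, show 1/(1+x) - (-1)/(1-x) - (2 + 2*(3*x^2)/3) = 2*x^4/((1+x)*(1-x)) from by
        field_simp; ring]
      positivity
  have := key (Set.mem_Icc.mpr ⟨le_refl 0, h0⟩) (Set.mem_Icc.mpr ⟨h0, le_refl t⟩) h0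
  simp at this
  linarith [this]

lemma aux_tanh_eq (x : ℝ) : Real.tanh (x/2) = (1 - Real.exp (-x)) / (1 + Real.exp (-x)) := by
  rw [Real.tanh_eq_sinh_div_cosh, Real.sinh_eq, Real.cosh_eq]
  have h1 : Real.exp (-(x/2)) * Real.exp (x/2) = 1 := by
    rw [← Real.exp_add]; norm_num
  have h2 : Real.exp (-x) = Real.exp (-(x/2)) * Real.exp (-(x/2)) := by
    rw [← Real.exp_add]; ring_nf
  have p1 : (0:ℝ) < Real.exp (x/2) := Real.exp_pos _
  have p2 : (0:ℝ) < Real.exp (-(x/2)) := Real.exp_pos _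
  have p3 : (0:ℝ) < 1 + Real.exp (-x) := by positivity
  rw [h2]
  rw [div_eq_div_iff (by positivity) (by nlinarith)]
  nlinarith [h1]

lemma aux_log_tanh (x : ℝ) (hx : 0 < x) :
    Real.log (Real.tanh (x/2)) =
      -(Real.log (1 + Real.exp (-x)) - Real.log (1 - Real.exp (-x))) := by
  have ht : Real.exp (-x) < 1 := by
    rw [Real.exp_lt_one_iff]; linarith
  have h1 : (0:ℝ) < 1 - Real.exp (-x) := by linarith
  have h2 : (0:ℝ) < 1 + Real.exp (-x) := by positivity
  rw [aux_tanh_eq, Real.log_div h1.ne' h2.ne']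
  ring

/-- For all `a > 0`, `ln(tanh((a+1)/2)) / ln(tanh(a/2)) ≤ e⁻¹`, and consequently
`1/(1 - ln(tanh((a+1)/2))/ln(tanh(a/2))) ≤ 1/(1 - e⁻¹) ≤ 2`. -/
theorem stmt5 (a : ℝ) (ha : 0 < a) :
    Real.log (Real.tanh ((a + 1) / 2)) / Real.log (Real.tanh (a / 2)) ≤ Real.exp (-1) ∧
    (1 - Real.exp (-1))⁻¹ ≤ 2 ∧
    1 / (1 - Real.log (Real.tanh ((a + 1) / 2)) / Real.log (Real.tanh (a / 2))) ≤ 2 := by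
  have hE : (2.7:ℝ) < Real.exp 1 := by
    have := Real.exp_one_gt_d9; norm_num at this ⊢; linarith
  have hE0 : (0:ℝ) < Real.exp 1 := Real.exp_pos 1
  set t := Real.exp (-a) with ht
  have ht0 : 0 < t := Real.exp_pos _
  have ht1 : t < 1 := by rw [ht, Real.exp_lt_one_iff]; linarith
  set s := Real.exp (-(a+1)) with hsdef
  have hs0 : 0 < s := Real.exp_pos _
  have hs1 : s < 1 := by rw [hsdef, Real.exp_lt_one_iff]; linarith
  have hss : s * Real.exp 1 = t := by
    rw [hsdef, ht, ← Real.exp_add]; ring_nf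
  have hL2 : Real.log (Real.tanh (a/2)) = -(Real.log (1+t) - Real.log (1-t)) :=
    aux_log_tanh a ha
  have hL1 : Real.log (Real.tanh ((a+1)/2)) = -(Real.log (1+s) - Real.log (1-s)) :=
    aux_log_tanh (a+1) (by linarith)
  set A := Real.log (1+s) - Real.log (1-s) with hA
  set B := Real.log (1+t) - Real.log (1-t) with hB
  have hAub : A ≤ 2*s/(1-s^2) := by
    have h := aux_artanh_ub s hs0.le hs1
    rwa [Real.log_div (by linarith) (by linarith)] at h
  have hBlb : 2*t + 2*t^3/3 ≤ B := aux_artanh_lb t ht0.le ht1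
  have hB0 : 0 < B := by nlinarith [pow_pos ht0 3]
  have hden : (0:ℝ) < 1 - s^2 := by nlinarith
  have key : A * Real.exp 1 ≤ B := by
    have h2 : 2*s/(1-s^2) * Real.exp 1 ≤ 2*t + 2*t^3/3 := by
      rw [div_mul_eq_mul_div, div_le_iff₀ hden]
      have hsE1 : s * Real.exp 1 < 1 := by rw [hss]; exact ht1
      have hsE0 : 0 < s * Real.exp 1 := by positivity
      have h3 : 0 < Real.exp 1 ^ 2 - 3 - (s * Real.exp 1)^2 := by nlinarith
      have h4 : 0 < s^3 * Real.exp 1 := by positivity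
      rw [← hss]
      nlinarith [mul_pos h4 h3]
    calc A * Real.exp 1 ≤ 2*s/(1-s^2) * Real.exp 1 :=
          mul_le_mul_of_nonneg_right hAub hE0.le
      _ ≤ 2*t + 2*t^3/3 := h2
      _ ≤ B := hBlb
  have hratio : Real.log (Real.tanh ((a + 1) / 2)) / Real.log (Real.tanh (a / 2))
      ≤ Real.exp (-1) := by
    rw [hL1, hL2, neg_div_neg_eq, Real.exp_neg, div_le_iff₀ hB0, inv_mul_eq_div,
      le_div_iff₀ hE0]
    exact key
  have hexp : Real.exp (-1) ≤ 1/2 := by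
    rw [Real.exp_neg]
    rw [inv_le_comm₀ hE0 (by norm_num)]
    norm_num
    linarith
  refine ⟨hratio, ?_, ?_⟩
  · rw [show (2:ℝ) = (1/2:ℝ)⁻¹ by norm_num]
    apply inv_anti₀ (by norm_num)
    linarith
  · rw [div_le_iff₀ (by linarith : (0:ℝ) < 1 - Real.log (Real.tanh ((a + 1) / 2)) / Real.log (Real.tanh (a / 2)))]
    linarith
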